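/- Under the hypotheses that r'' = -(γ/|r|³) r and p'' = (3γ/|r|⁵)(r·p) r - (γ/|r|³) p with r(t) ≠ 0 for all t, the function Z = p' × r - p × r' is a constant vector (Pines's vector integral). -/

import Mathlib

open Matrix

/-- Euclidean norm of a vector in ℝ³. -/
noncomputable def e3norm (x : Fin 3 → ℝ) : ℝ := Real.sqrt (x ⬝ᵥ x)

theorem stmt2 (γ : ℝ) (hγ : 0 < γ) (r p : ℝ → Fin 3 → ℝ)
    (hrne : ∀ t, r t ≠ 0)
    (hr1 : Differentiable ℝ r) (hr2 : Differentiable ℝ (deriv r))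
    (hp1 : Differentiable ℝ p) (hp2 : Differentiable ℝ (deriv p))
    (hreq : ∀ t, deriv (deriv r) t = -(γ / (e3norm (r t))^3) • r t)
    (hpeq : ∀ t, deriv (deriv p) t =
      (3 * γ / (e3norm (r t))^5 * (r t ⬝ᵥ p t)) • r t - (γ / (e3norm (r t))^3) • p t) :
    ∀ t s, deriv p t ⨯₃ r t - p t ⨯₃ deriv r t = deriv p s ⨯₃ r s - p s ⨯₃ deriv r s := by
  have key : ∀ t, HasDerivAt (fun t => deriv p t ⨯₃ r t - p t ⨯₃ deriv r t)
      (0 : Fin 3 → ℝ) t := by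
    intro t
    have hp' : ∀ j, HasDerivAt (fun t => p t j) (deriv p t j) t :=
      fun j => hasDerivAt_pi.mp (hp1 t).hasDerivAt j
    have hp'' : ∀ j, HasDerivAt (fun t => deriv p t j) (deriv (deriv p) t j) t :=
      fun j => hasDerivAt_pi.mp (hp2 t).hasDerivAt j
    have hr' : ∀ j, HasDerivAt (fun t => r t j) (deriv r t j) t :=
      fun j => hasDerivAt_pi.mp (hr1 t).hasDerivAt j
    have hr'' : ∀ j, HasDerivAt (fun t => deriv r t j) (deriv (deriv r) t j) t :=
      fun j => hasDerivAt_pi.mp (hr2 t).hasDerivAt j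
    have hre : ∀ j, deriv (deriv r) t j = -(γ / (e3norm (r t))^3) * r t j := by
      intro j; rw [hreq t]; simp
    have hpe : ∀ j, deriv (deriv p) t j =
        (3 * γ / (e3norm (r t))^5 * (r t ⬝ᵥ p t)) * r t j
          - (γ / (e3norm (r t))^3) * p t j := by
      intro j; rw [hpeq t]; simp
    rw [hasDerivAt_pi]
    intro i
    fin_cases i <;>
      simp only [crossProduct, Pi.sub_apply, LinearMap.mk₂_apply, Matrix.cons_val_zero,
        Matrix.cons_val_one, Matrix.head_cons, Matrix.cons_val_two, Matrix.tail_cons,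
        Fin.isValue, Pi.zero_apply]
    · have H := ((((hp'' 1).mul (hr' 2)).sub ((hp'' 2).mul (hr' 1))).sub
        (((hp' 1).mul (hr'' 2)).sub ((hp' 2).mul (hr'' 1))))
      convert H using 1
      · funext x; simp
      rw [hre 1, hre 2, hpe 1, hpe 2]; ring
    · have H := ((((hp'' 2).mul (hr' 0)).sub ((hp'' 0).mul (hr' 2))).sub
        (((hp' 2).mul (hr'' 0)).sub ((hp' 0).mul (hr'' 2))))
      convert H using 1
      · funext x; simp
      rw [hre 0, hre 2, hpe 0, hpe 2]; ring
    · have H := ((((hp'' 0).mul (hr' 1)).sub ((hp'' 1).mul (hr' 0))).sub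
        (((hp' 0).mul (hr'' 1)).sub ((hp' 1).mul (hr'' 0))))
      convert H using 1
      · funext x; simp
      rw [hre 0, hre 1, hpe 0, hpe 1]; ring
  intro t s
  exact is_const_of_deriv_eq_zero (fun x => (key x).differentiableAt)
    (fun x => (key x).deriv) t s
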